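/- arXiv:2402.05754 — 2 statements merged into one kernel-verified Lean document; each statement's English description precedes it below -/
import Mathlib

section
/- Let a, b, a', b' ∈ V with a ≠ b, a' ≠ b', and ϑ_0(a) = ϑ_0(b) = ϑ_0(a') = ϑ_0(b'). Then there exists a symplectic F_2-linear bijection A : V → V such that ϑ_a(A u) = ϑ_{a'}(u) and ϑ_b(A u) = ϑ_{b'}(u) for all u ∈ V. (That is, Sp(2m,2) acts 2-transitively on each of its two orbits Ω⁺ and Ω⁻ of quadratic forms linearizing to ⟨·,·⟩.) -/
open Finset

/-- The symplectic bilinear form `⟨u,v⟩ = ∑_{i<m} (u_i v_{m+i} + u_{m+i} v_i)` on `(F_2)^{2m}`. -/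
def symp (m : ℕ) (u v : Fin (2*m) → ZMod 2) : ZMod 2 :=
  ∑ i : Fin m, (u ⟨i.1, by omega⟩ * v ⟨m + i.1, by omega⟩ +
    u ⟨m + i.1, by omega⟩ * v ⟨i.1, by omega⟩)

/-- The quadratic form `ϑ_0(u) = ∑_{i<m} u_i u_{m+i}`. -/
def th0 (m : ℕ) (u : Fin (2*m) → ZMod 2) : ZMod 2 :=
  ∑ i : Fin m, u ⟨i.1, by omega⟩ * u ⟨m + i.1, by omega⟩

/-- The quadratic form `ϑ_a(u) = ϑ_0(u) + ⟨a,u⟩`. -/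
def th (m : ℕ) (a u : Fin (2*m) → ZMod 2) : ZMod 2 :=
  th0 m u + symp m a u

section Aux

variable {m : ℕ}

lemma zmod2_sq (s : ZMod 2) : s * s = s := by revert s; decide
lemma zmod2_add_self (s : ZMod 2) : s + s = 0 := by revert s; decide
lemma zmod2_cases (s : ZMod 2) : s = 0 ∨ s = 1 := by revert s; decide

lemma symp_comm (u v : Fin (2*m) → ZMod 2) : symp m u v = symp m v u := by
  unfold symp; apply Finset.sum_congr rfl; intro i _; ring

lemma symp_self (v : Fin (2*m) → ZMod 2) : symp m v v = 0 := by
  unfold symp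
  apply Finset.sum_eq_zero; intro i _
  rw [mul_comm]; exact zmod2_add_self _

lemma symp_add_left (u v w : Fin (2*m) → ZMod 2) :
    symp m (u + v) w = symp m u w + symp m v w := by
  unfold symp
  rw [← Finset.sum_add_distrib]
  apply Finset.sum_congr rfl; intro i _
  simp only [Pi.add_apply]; ring

lemma symp_add_right (u v w : Fin (2*m) → ZMod 2) :
    symp m u (v + w) = symp m u v + symp m u w := by
  rw [symp_comm, symp_add_left, symp_comm v u, symp_comm w u]

lemma symp_smul_left (s : ZMod 2) (u v : Fin (2*m) → ZMod 2) :
    symp m (s • u) v = s * symp m u v := by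
  unfold symp
  rw [Finset.mul_sum]
  apply Finset.sum_congr rfl; intro i _
  simp only [Pi.smul_apply, smul_eq_mul]; ring

lemma symp_smul_right (s : ZMod 2) (u v : Fin (2*m) → ZMod 2) :
    symp m u (s • v) = s * symp m u v := by
  rw [symp_comm, symp_smul_left, symp_comm]

lemma th0_add_smul (u v : Fin (2*m) → ZMod 2) (s : ZMod 2) :
    th0 m (u + s • v) = th0 m u + s * th0 m v + s * symp m u v := by
  unfold th0 symp
  rw [Finset.mul_sum, Finset.mul_sum, ← Finset.sum_add_distrib, ← Finset.sum_add_distrib]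
  apply Finset.sum_congr rfl; intro i _
  simp only [Pi.add_apply, Pi.smul_apply, smul_eq_mul]
  linear_combination (v ⟨i.1, by omega⟩ * v ⟨m + i.1, by omega⟩) * zmod2_sq s

lemma th0_add (u v : Fin (2*m) → ZMod 2) :
    th0 m (u + v) = th0 m u + th0 m v + symp m u v := by
  have := th0_add_smul u v 1
  simpa using this

/-- The symplectic transvection `u ↦ u + ⟨v,u⟩ v` as a linear map. -/
def Tl (m : ℕ) (v : Fin (2*m) → ZMod 2) :
    (Fin (2*m) → ZMod 2) →ₗ[ZMod 2] (Fin (2*m) → ZMod 2) where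
  toFun u := u + symp m v u • v
  map_add' u w := by
    rw [symp_add_right, add_smul]; abel
  map_smul' s u := by
    simp only [RingHom.id_apply]
    rw [symp_smul_right, smul_add, smul_smul]

lemma Tl_apply (v u : Fin (2*m) → ZMod 2) : Tl m v u = u + symp m v u • v := rfl

lemma Tl_invol (v u : Fin (2*m) → ZMod 2) : Tl m v (Tl m v u) = u := by
  rw [Tl_apply, Tl_apply, symp_add_right, symp_smul_right, symp_self, mul_zero, add_zero,
    add_assoc, ← add_smul, zmod2_add_self, zero_smul, add_zero]

/-- The symplectic transvection as a linear equivalence. -/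
def T (m : ℕ) (v : Fin (2*m) → ZMod 2) :
    (Fin (2*m) → ZMod 2) ≃ₗ[ZMod 2] (Fin (2*m) → ZMod 2) :=
  { Tl m v with
    invFun := Tl m v
    left_inv := Tl_invol v
    right_inv := Tl_invol v }

lemma T_apply (v u : Fin (2*m) → ZMod 2) : T m v u = u + symp m v u • v := rfl

lemma symp_T (v u w : Fin (2*m) → ZMod 2) : symp m (T m v u) (T m v w) = symp m u w := by
  rw [T_apply, T_apply, symp_add_left, symp_add_right, symp_add_right,
    symp_smul_left, symp_smul_right, symp_smul_left, symp_smul_right, symp_self,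
    symp_comm v u]
  have h2 : (2 : ZMod 2) = 0 := by decide
  linear_combination (symp m v w * symp m u v) * h2

/-- The accompanying action on the parametrizing vector of the quadratic form. -/
def act (m : ℕ) (v c : Fin (2*m) → ZMod 2) : Fin (2*m) → ZMod 2 :=
  c + (th0 m v + 1 + symp m v c) • v

lemma th_T (c v u : Fin (2*m) → ZMod 2) : th m c (T m v u) = th m (act m v c) u := by
  rw [T_apply]
  unfold th act
  rw [th0_add_smul, symp_add_right, symp_smul_right, symp_add_left, symp_smul_left,
    symp_comm u v, symp_comm c v]
  linear_combination zmod2_sq (symp m v u)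

lemma act_th0 (v c : Fin (2*m) → ZMod 2) : th0 m (act m v c) = th0 m c := by
  unfold act
  rw [th0_add_smul, symp_comm c v]
  linear_combination zmod2_sq (th0 m v + 1 + symp m v c)

lemma act_invol (v c : Fin (2*m) → ZMod 2) : act m v (act m v c) = c := by
  unfold act
  rw [symp_add_right, symp_smul_right, symp_self, mul_zero, add_zero, add_assoc, ← add_smul,
    zmod2_add_self, zero_smul, add_zero]

lemma act_zero (c : Fin (2*m) → ZMod 2) : act m 0 c = c := by
  unfold act; rw [smul_zero, add_zero]

lemma act_fix (v c : Fin (2*m) → ZMod 2) (h : th0 m v + 1 + symp m v c = 0) :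
    act m v c = c := by
  unfold act; rw [h, zero_smul, add_zero]

lemma act_swap (x y : Fin (2*m) → ZMod 2) (h : th0 m x = th0 m y) :
    act m (x + y) x = y := by
  unfold act
  have he : th0 m (x + y) + 1 + symp m (x + y) x = 1 := by
    rw [th0_add, symp_add_left, symp_self, symp_comm y x, h]
    linear_combination zmod2_add_self (th0 m y) + zmod2_add_self (symp m x y)
  rw [he, one_smul]
  funext i; simp [Pi.add_apply]
  linear_combination zmod2_add_self (x i)

lemma exists_symp_one (w : Fin (2*m) → ZMod 2) (hw : w ≠ 0) : ∃ p, symp m p w = 1 := by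
  have hex : ∃ j, w j ≠ 0 := by
    by_contra h; push_neg at h; exact hw (funext fun j => h j)
  obtain ⟨j, hj⟩ := hex
  have hj1 : w j = 1 := (zmod2_cases (w j)).resolve_left hj
  by_cases hlt : j.1 < m
  · refine ⟨fun k => if k.1 = m + j.1 then 1 else 0, ?_⟩
    unfold symp
    rw [Finset.sum_eq_single (⟨j.1, hlt⟩ : Fin m)]
    · simp only
      rw [if_neg (by omega), if_pos trivial, zero_mul, one_mul, zero_add]
      convert hj1 using 2
    · intro i _ hne
      simp only
      rw [if_neg (by omega), if_neg (fun h => hne (Fin.ext (Nat.add_left_cancel h))), zero_mul,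
        zero_mul, add_zero]
    · intro h; exact absurd (Finset.mem_univ _) h
  · push_neg at hlt
    have hr : j.1 - m < m := by omega
    refine ⟨fun k => if k.1 = j.1 - m then 1 else 0, ?_⟩
    unfold symp
    rw [Finset.sum_eq_single (⟨j.1 - m, hr⟩ : Fin m)]
    · simp only
      rw [if_pos trivial, if_neg (by omega), one_mul, zero_mul, add_zero]
      convert hj1 using 2
      exact Fin.ext (show m + (j.1 - m) = j.1 by omega)
    · intro i _ hne
      simp only
      rw [if_neg (fun h => hne (Fin.ext h)), if_neg (by omega), zero_mul, zero_mul,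
        add_zero]
    · intro h; exact absurd (Finset.mem_univ _) h

/-- Surjectivity of `c ↦ (⟨c,w₁⟩, ⟨c,w₂⟩)` for independent `w₁ w₂`. -/
lemma exists_solve (w₁ w₂ : Fin (2*m) → ZMod 2) (h1 : w₁ ≠ 0) (h2 : w₂ ≠ 0) (h12 : w₁ ≠ w₂)
    (α β : ZMod 2) : ∃ c, symp m c w₁ = α ∧ symp m c w₂ = β := by
  obtain ⟨p, hp'⟩ := exists_symp_one w₁ h1
  obtain ⟨q, hq'⟩ := exists_symp_one w₂ h2
  rw [symp_comm] at hp' hq'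
  have h12' : w₁ + w₂ ≠ 0 := by
    intro h; apply h12; funext i
    have := congrFun h i
    simp only [Pi.add_apply, Pi.zero_apply] at this
    rcases zmod2_cases (w₁ i) with hh | hh <;> rcases zmod2_cases (w₂ i) with hh2 | hh2 <;>
      rw [hh, hh2] <;> rw [hh, hh2] at this <;> first | rfl | simp at this
  obtain ⟨r, hr⟩ := exists_symp_one (w₁ + w₂) h12'
  rw [symp_comm, symp_add_left, symp_comm w₁ r, symp_comm w₂ r] at hr
  have hp : symp m p w₁ = 1 := by rw [symp_comm]; exact hp'
  have hq : symp m q w₂ = 1 := by rw [symp_comm]; exact hq'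
  suffices hs : ∃ c10 c01, symp m c10 w₁ = 1 ∧ symp m c10 w₂ = 0
      ∧ symp m c01 w₁ = 0 ∧ symp m c01 w₂ = 1 by
    obtain ⟨c10, c01, ha1, ha2, hb1, hb2⟩ := hs
    refine ⟨α • c10 + β • c01, ?_, ?_⟩
    · rw [symp_add_left, symp_smul_left, symp_smul_left, ha1, hb1, mul_one, mul_zero, add_zero]
    · rw [symp_add_left, symp_smul_left, symp_smul_left, ha2, hb2, mul_one, mul_zero, zero_add]
  rcases zmod2_cases (symp m p w₂) with hx | hx
  · rcases zmod2_cases (symp m q w₁) with hy | hy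
    · exact ⟨p, q, hp, hx, hy, hq⟩
    · refine ⟨p, p + q, hp, hx, ?_, ?_⟩
      · rw [symp_add_left, hp, hy]; exact zmod2_add_self 1
      · rw [symp_add_left, hx, hq, zero_add]
  · rcases zmod2_cases (symp m q w₁) with hy | hy
    · refine ⟨p + q, q, ?_, ?_, hy, hq⟩
      · rw [symp_add_left, hp, hy, add_zero]
      · rw [symp_add_left, hx, hq]; exact zmod2_add_self 1
    · rcases zmod2_cases (symp m r w₁) with hz | hz
      · have hrw2 : symp m r w₂ = 1 := by rw [hz, zero_add] at hr; exact hr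
        refine ⟨p + r, r, ?_, ?_, hz, hrw2⟩
        · rw [symp_add_left, hp, hz, add_zero]
        · rw [symp_add_left, hx, hrw2]; exact zmod2_add_self 1
      · have hrw2 : symp m r w₂ = 0 := by
          rw [hz] at hr
          rcases zmod2_cases (symp m r w₂) with hh | hh
          · exact hh
          · rw [hh] at hr; exact absurd hr (by decide)
        refine ⟨r, p + r, hz, hrw2, ?_, ?_⟩
        · rw [symp_add_left, hp, hz]; exact zmod2_add_self 1
        · rw [symp_add_left, hx, hrw2, add_zero]

/-- Existence of an intermediate point `c`. -/
lemma exists_mid (a' b₁ b' : Fin (2*m) → ZMod 2) (hb1 : b₁ ≠ a') (hb' : b' ≠ a') (hbb : b₁ ≠ b')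
    (e1 : th0 m b₁ = th0 m a') (e2 : th0 m b' = th0 m a')
    (hfail : symp m (b₁ + a') (b' + a') = 0) :
    ∃ c, th0 m c = th0 m a' ∧ symp m c (b₁ + a') = 1 + symp m b₁ a'
      ∧ symp m c (b' + a') = 1 + symp m b' a' := by
  have hw1 : b₁ + a' ≠ 0 := by
    intro h; apply hb1; funext i
    have := congrFun h i
    simp only [Pi.add_apply, Pi.zero_apply] at this
    rcases zmod2_cases (b₁ i) with hh | hh <;> rcases zmod2_cases (a' i) with hh2 | hh2 <;>
      rw [hh, hh2] <;> rw [hh, hh2] at this <;> first | rfl | simp at this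
  have hw2 : b' + a' ≠ 0 := by
    intro h; apply hb'; funext i
    have := congrFun h i
    simp only [Pi.add_apply, Pi.zero_apply] at this
    rcases zmod2_cases (b' i) with hh | hh <;> rcases zmod2_cases (a' i) with hh2 | hh2 <;>
      rw [hh, hh2] <;> rw [hh, hh2] at this <;> first | rfl | simp at this
  have hww : b₁ + a' ≠ b' + a' := by
    intro h; apply hbb; funext i
    have := congrFun h i
    simp only [Pi.add_apply] at this
    rcases zmod2_cases (b₁ i) with hh | hh <;> rcases zmod2_cases (b' i) with hh2 | hh2 <;>
      rcases zmod2_cases (a' i) with hh3 | hh3 <;> rw [hh, hh2] <;>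
      rw [hh, hh2, hh3] at this <;> first | rfl | simp at this
  obtain ⟨c₀, hc1, hc2⟩ := exists_solve (b₁ + a') (b' + a') hw1 hw2 hww
    (1 + symp m b₁ a') (1 + symp m b' a')
  rcases zmod2_cases (th0 m c₀ + th0 m a') with hth | hth
  · refine ⟨c₀, ?_, hc1, hc2⟩
    rcases zmod2_cases (th0 m c₀) with h | h <;> rcases zmod2_cases (th0 m a') with h2 | h2 <;>
      rw [h, h2] <;> rw [h, h2] at hth <;> first | rfl | simp at hth
  · refine ⟨c₀ + (b₁ + a'), ?_, ?_, ?_⟩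
    · rw [th0_add, hc1, th0_add, e1, symp_comm b₁ a']
      rcases zmod2_cases (th0 m c₀) with h | h <;> rcases zmod2_cases (th0 m a') with h2 | h2 <;>
        rcases zmod2_cases (symp m a' b₁) with h3 | h3 <;>
        rw [h, h2, h3] <;> rw [h, h2] at hth <;> first | rfl | simp_all
    · rw [symp_add_left, hc1, symp_self, add_zero]
    · rw [symp_add_left, hc2, hfail, add_zero]

lemma two_step (a' b₁ b' : Fin (2*m) → ZMod 2) (hb1 : b₁ ≠ a') (hb' : b' ≠ a')
    (e1 : th0 m b₁ = th0 m a') (e2 : th0 m b' = th0 m a') :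
    ∃ v₂ v₃, act m v₂ a' = a' ∧ act m v₃ a' = a' ∧ act m v₃ (act m v₂ b₁) = b' := by
  have h2 : (2 : ZMod 2) = 0 := by decide
  by_cases hbb : b₁ = b'
  · exact ⟨0, 0, act_zero a', act_zero a', by rw [act_zero, act_zero, hbb]⟩
  rcases zmod2_cases (th0 m (b₁ + b') + 1 + symp m (b₁ + b') a') with ht | ht
  · refine ⟨b₁ + b', 0, act_fix _ _ ht, act_zero a', ?_⟩
    rw [act_swap b₁ b' (e1.trans e2.symm), act_zero]
  · have hfail : symp m (b₁ + a') (b' + a') = 0 := by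
      rw [th0_add, symp_add_left, e1, e2] at ht
      rw [symp_add_left, symp_add_right, symp_add_right, symp_self, symp_comm a' b']
      linear_combination ht - th0 m a' * h2
    obtain ⟨c, hcth, hc1, hc2⟩ := exists_mid a' b₁ b' hb1 hb' hbb e1 e2 hfail
    refine ⟨b₁ + c, c + b', ?_, ?_, ?_⟩
    · apply act_fix
      rw [th0_add, symp_add_left, e1, hcth, symp_comm c a']
      rw [symp_add_right] at hc1
      linear_combination hc1 + (th0 m a' + symp m b₁ a' + 1) * h2 + symp_comm (m := m) b₁ c +
        symp_comm (m := m) a' c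
    · apply act_fix
      rw [th0_add, symp_add_left, hcth, e2, symp_comm c a']
      rw [symp_add_right] at hc2
      linear_combination hc2 + (th0 m a' + symp m b' a' + 1) * h2 +
        symp_comm (m := m) a' c
    · rw [act_swap b₁ c (e1.trans hcth.symm), act_swap c b' (hcth.trans e2.symm)]

end Aux

/-- `Sp(2m,2)` acts 2-transitively on each of its two orbits of quadratic forms:
if `a ≠ b`, `a' ≠ b'` and `ϑ_0(a) = ϑ_0(b) = ϑ_0(a') = ϑ_0(b')`, then some symplectic
linear bijection carries the pair `(ϑ_a, ϑ_b)` to `(ϑ_{a'}, ϑ_{b'})`. -/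
theorem stmt_2 (m : ℕ) (hm : 1 ≤ m) (a b a' b' : Fin (2*m) → ZMod 2)
    (hab : a ≠ b) (hab' : a' ≠ b')
    (h1 : th0 m a = th0 m b) (h2 : th0 m b = th0 m a') (h3 : th0 m a' = th0 m b') :
    ∃ A : (Fin (2*m) → ZMod 2) ≃ₗ[ZMod 2] (Fin (2*m) → ZMod 2),
      (∀ u v, symp m (A u) (A v) = symp m u v) ∧
      (∀ u, th m a (A u) = th m a' u) ∧
      (∀ u, th m b (A u) = th m b' u) := by
  set v₁ := a + a' with hv₁
  have ha1 : act m v₁ a = a' := act_swap a a' (h1.trans h2)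
  set b₁ := act m v₁ b with hb₁def
  have hb₁th : th0 m b₁ = th0 m a' := by rw [hb₁def, act_th0]; exact h2
  have hb₁ne : b₁ ≠ a' := by
    intro h
    apply hab
    have : act m v₁ b₁ = act m v₁ a' := by rw [h]
    rw [hb₁def, act_invol, ← ha1, act_invol] at this
    exact this.symm
  obtain ⟨v₂, v₃, hf2, hf3, hmove⟩ := two_step a' b₁ b' hb₁ne (Ne.symm hab') hb₁th h3.symm
  refine ⟨(T m v₃).trans ((T m v₂).trans (T m v₁)), ?_, ?_, ?_⟩
  · intro u v
    simp only [LinearEquiv.trans_apply]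
    rw [symp_T, symp_T, symp_T]
  · intro u
    simp only [LinearEquiv.trans_apply]
    rw [th_T, ha1, th_T, hf2, th_T, hf3]
  · intro u
    simp only [LinearEquiv.trans_apply]
    rw [th_T, ← hb₁def, th_T, th_T, hmove]
end

section
/- Let X be a finite set and let G₁ and G₂ be simple graphs on the vertex set X. Then the following are equivalent: (1) there exists a subset Y ⊆ X such that for all distinct a, b ∈ X, a and b are adjacent in G₂ if and only if exactly one of the following holds: a and b are adjacent in G₁, or exactly one of a, b lies in Y (i.e., G₂ is obtained from G₁ by Seidel switching with respect to Y); (2) for every three distinct vertices a, b, c ∈ X, the number of edges of G₁ among the pairs {a,b}, {a,c}, {b,c} is odd if and only if the number of edges of G₂ among these pairs is odd. (Two graphs are switching equivalent if and only if they have the same associated two-graph.) -/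
open scoped Classical in
private lemma odd_three_iff (p q r : Prop) [Decidable p] [Decidable q] [Decidable r] :
    Odd ((if p then 1 else 0) + (if q then 1 else 0) + (if r then 1 else 0) : ℕ)
      ↔ Xor' p (Xor' q r) := by
  by_cases hp : p <;> by_cases hq : q <;> by_cases hr : r <;>
    simp [hp, hq, hr, Xor', Nat.odd_iff]

private lemma xor6 (p q r u v w : Prop) [Decidable p] [Decidable q] [Decidable r]
    [Decidable u] [Decidable v] [Decidable w] :
    Xor' p (Xor' q r) ↔
      Xor' (Xor' p (Xor' u v)) (Xor' (Xor' q (Xor' u w)) (Xor' r (Xor' v w))) := by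
  by_cases hp : p <;> by_cases hq : q <;> by_cases hr : r <;> by_cases hu : u <;>
    by_cases hv : v <;> by_cases hw : w <;> simp [hp, hq, hr, hu, hv, hw, Xor']

private lemma xor_back (p q r p' q' r' : Prop) [Decidable p] [Decidable q] [Decidable r]
    [Decidable p'] [Decidable q'] [Decidable r']
    (key : Xor' p (Xor' q r) ↔ Xor' p' (Xor' q' r')) :
    r' ↔ Xor' r (Xor' (¬(p ↔ p')) (¬(q ↔ q'))) := by
  by_cases hp : p <;> by_cases hq : q <;> by_cases hr : r <;> by_cases hp' : p' <;>
    by_cases hq' : q' <;> by_cases hr' : r' <;>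
    simp_all [Xor']

open scoped Classical in
/-- Two graphs on a finite vertex set `X` are Seidel-switching equivalent iff they have the
same associated two-graph: (1) `G₂` is obtained from `G₁` by switching w.r.t. some `Y ⊆ X`
iff (2) every triple of distinct vertices spans an odd number of edges in `G₁` exactly when
it does in `G₂`. -/
theorem stmt_8 (X : Type*) [Fintype X] (G₁ G₂ : SimpleGraph X) :
    (∃ Y : Set X, ∀ a b : X, a ≠ b →
        (G₂.Adj a b ↔ Xor' (G₁.Adj a b) (Xor' (a ∈ Y) (b ∈ Y))))
    ↔ (∀ a b c : X, a ≠ b → a ≠ c → b ≠ c →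
        (Odd ((if G₁.Adj a b then 1 else 0) + (if G₁.Adj a c then 1 else 0)
            + (if G₁.Adj b c then 1 else 0) : ℕ)
          ↔ Odd ((if G₂.Adj a b then 1 else 0) + (if G₂.Adj a c then 1 else 0)
            + (if G₂.Adj b c then 1 else 0) : ℕ))) := by
  constructor
  · rintro ⟨Y, hY⟩ a b c hab hac hbc
    rw [odd_three_iff, odd_three_iff, hY a b hab, hY a c hac, hY b c hbc]
    exact xor6 _ _ _ _ _ _
  · intro h
    by_cases hne : Nonempty X
    · obtain ⟨x⟩ := hne
      refine ⟨{a | a ≠ x ∧ ¬(G₁.Adj x a ↔ G₂.Adj x a)}, fun a b hab => ?_⟩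
      simp only [Set.mem_setOf_eq]
      by_cases ha : a = x
      · subst ha
        simp only [Xor', Xor, ne_eq, not_true_eq_false, false_and, hab.symm, not_false_eq_true,
          true_and]
        tauto
      · by_cases hb : b = x
        · subst hb
          have h1 := G₁.adj_comm a b
          have h2 := G₂.adj_comm a b
          simp only [Xor', Xor, ne_eq, not_true_eq_false, false_and, ha, not_false_eq_true, true_and]
          tauto
        · have key := h x a b (Ne.symm ha) (Ne.symm hb) hab
          rw [odd_three_iff, odd_three_iff] at key
          simp only [ne_eq, ha, hb, not_false_eq_true, true_and]
          exact xor_back _ _ _ _ _ _ key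
    · exact ⟨∅, fun a _ _ => absurd ⟨a⟩ hne⟩
end
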